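/- Let X be a totally ordered set and X_∞ = X ∪ {∞}. The order topology on X_∞ is finer than or equal to the circle topology on X_∞; moreover the two topologies are equal if and only if X has a smallest element. -/

import Mathlib

open Set TopologicalSpace

/-- The circle topology on `X ∪ {∞}`: it extends the order topology of `X` and has the sets
`{∞} ∪ (X \ [x₀, x₁])` as a neighbourhood basis at `∞`. -/
def circleTopology (X : Type*) [LinearOrder X] : TopologicalSpace (WithTop X) :=
  TopologicalSpace.generateFrom
    ({ s : Set (WithTop X) | ∃ u : Set X, (Preorder.topology X).IsOpen u ∧ s = (↑) '' u } ∪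
     { s : Set (WithTop X) | ∃ x₀ x₁ : X, s = insert ⊤ ((↑) '' (Set.Icc x₀ x₁)ᶜ) })

section aux

private lemma gen_union {α : Type*} {g : Set (Set α)} {s t : Set α}
    (hs : TopologicalSpace.GenerateOpen g s) (ht : TopologicalSpace.GenerateOpen g t) :
    TopologicalSpace.GenerateOpen g (s ∪ t) := by
  rw [← sUnion_pair]
  exact .sUnion _ (by rintro u (rfl | rfl) <;> assumption)

private lemma gen_empty {α : Type*} {g : Set (Set α)} :
    TopologicalSpace.GenerateOpen g (∅ : Set α) := by
  rw [← sUnion_empty]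
  exact .sUnion _ (by simp)

variable {X : Type*} [LinearOrder X]

private lemma wt_isOpen_Ioi (a : WithTop X) :
    (Preorder.topology (WithTop X)).IsOpen (Ioi a) :=
  TopologicalSpace.GenerateOpen.basic _ ⟨a, Or.inl rfl⟩

private lemma wt_isOpen_Iio (a : WithTop X) :
    (Preorder.topology (WithTop X)).IsOpen (Iio a) :=
  TopologicalSpace.GenerateOpen.basic _ ⟨a, Or.inr rfl⟩

private lemma image_coe_open' {u : Set X}
    (hu : TopologicalSpace.GenerateOpen
      { s : Set X | ∃ a : X, s = { b : X | a < b } ∨ s = { b : X | b < a } } u) :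
    (Preorder.topology (WithTop X)).IsOpen ((↑) '' u : Set (WithTop X)) := by
  induction hu with
  | basic s hs =>
    obtain ⟨a, rfl | rfl⟩ := hs
    · have : ((↑) '' {b : X | a < b} : Set (WithTop X)) = Ioi (a : WithTop X) ∩ Iio ⊤ := by
        rw [show {b : X | a < b} = Ioi a from rfl, WithTop.image_coe_Ioi, ← Ioi_inter_Iio]
      rw [this]
      exact TopologicalSpace.GenerateOpen.inter _ _ (wt_isOpen_Ioi _) (wt_isOpen_Iio _)
    · have : ((↑) '' {b : X | b < a} : Set (WithTop X)) = Iio (a : WithTop X) := by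
        rw [show {b : X | b < a} = Iio a from rfl, WithTop.image_coe_Iio]
      rw [this]
      exact wt_isOpen_Iio _
  | univ =>
    have : ((↑) '' (univ : Set X) : Set (WithTop X)) = Iio ⊤ := by
      rw [image_univ, WithTop.range_coe]
    rw [this]; exact wt_isOpen_Iio _
  | inter s t _ _ ihs iht =>
    rw [image_inter WithTop.coe_injective]
    exact TopologicalSpace.GenerateOpen.inter _ _ ihs iht
  | sUnion S _ ih =>
    rw [image_sUnion]
    refine TopologicalSpace.GenerateOpen.sUnion _ ?_
    rintro _ ⟨t, htS, rfl⟩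
    exact ih t htS

private lemma image_coe_open {u : Set X}
    (hu : (Preorder.topology X).IsOpen u) :
    (Preorder.topology (WithTop X)).IsOpen ((↑) '' u : Set (WithTop X)) :=
  image_coe_open' hu

private lemma compl_Icc' (x₀ x₁ : X) : (Icc x₀ x₁)ᶜ = Iio x₀ ∪ Ioi x₁ := by
  ext z
  simp only [mem_compl_iff, mem_Icc, not_and_or, not_le, mem_union, mem_Iio, mem_Ioi]

private lemma insert_top_image_compl_Icc (x₀ x₁ : X) :
    insert (⊤ : WithTop X) ((↑) '' (Icc x₀ x₁)ᶜ) = Iio (x₀ : WithTop X) ∪ Ioi (x₁ : WithTop X) := by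
  rw [compl_Icc', image_union, WithTop.image_coe_Iio, WithTop.image_coe_Ioi]
  ext z
  cases z with
  | top => simp [WithTop.coe_lt_top]
  | coe y => simp [WithTop.coe_lt_coe, (WithTop.coe_lt_top y).ne, lt_irrefl]

end aux

theorem stmt7 {X : Type*} [LinearOrder X] [Nonempty X] :
    (∀ s : Set (WithTop X), (circleTopology X).IsOpen s →
      (Preorder.topology (WithTop X)).IsOpen s) ∧
    (Preorder.topology (WithTop X) = circleTopology X ↔ ∃ m : X, ∀ x : X, m ≤ x) := by
  set G := ({ s : Set (WithTop X) | ∃ u : Set X, (Preorder.topology X).IsOpen u ∧ s = (↑) '' u } ∪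
     { s : Set (WithTop X) | ∃ x₀ x₁ : X, s = insert ⊤ ((↑) '' (Set.Icc x₀ x₁)ᶜ) }) with hG
  have part1' : ∀ s : Set (WithTop X), TopologicalSpace.GenerateOpen G s →
      (Preorder.topology (WithTop X)).IsOpen s := by
    intro s hs
    induction hs with
    | basic t ht =>
      rcases ht with ⟨u, hu, rfl⟩ | ⟨x₀, x₁, rfl⟩
      · exact image_coe_open hu
      · rw [insert_top_image_compl_Icc]
        exact gen_union (wt_isOpen_Iio _) (wt_isOpen_Ioi _)
    | univ => exact TopologicalSpace.GenerateOpen.univ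
    | inter s t _ _ ihs iht => exact TopologicalSpace.GenerateOpen.inter _ _ ihs iht
    | sUnion S _ ih => exact TopologicalSpace.GenerateOpen.sUnion _ ih
  have part1 : ∀ s : Set (WithTop X), (circleTopology X).IsOpen s →
      (Preorder.topology (WithTop X)).IsOpen s := fun s hs => part1' s hs
  refine ⟨part1, ?_, ?_⟩
  · -- equality → minimum
    intro h
    obtain ⟨x⟩ := ‹Nonempty X›
    have key : ∀ s : Set (WithTop X), TopologicalSpace.GenerateOpen G s → (⊤ : WithTop X) ∈ s →
        ∃ x₀ x₁ : X, insert (⊤ : WithTop X) ((↑) '' (Icc x₀ x₁)ᶜ) ⊆ s := by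
      intro s hs
      induction hs with
      | basic t ht =>
        intro htop
        rcases ht with ⟨u, _, rfl⟩ | ⟨x₀, x₁, rfl⟩
        · exact absurd htop (by simp)
        · exact ⟨x₀, x₁, Subset.rfl⟩
      | univ => exact fun _ => ⟨x, x, subset_univ _⟩
      | inter s t _ _ ihs iht =>
        rintro ⟨hts, htt⟩
        obtain ⟨a₀, a₁, ha⟩ := ihs hts
        obtain ⟨b₀, b₁, hb⟩ := iht htt
        refine ⟨min a₀ b₀, max a₁ b₁, subset_inter (Subset.trans ?_ ha) (Subset.trans ?_ hb)⟩ <;>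
        · apply insert_subset_insert
          apply image_mono
          apply compl_subset_compl.2
          exact Icc_subset_Icc (by simp) (by simp)
      | sUnion S _ ih =>
        rintro ⟨t, htS, htop⟩
        obtain ⟨x₀, x₁, hsub⟩ := ih t htS htop
        exact ⟨x₀, x₁, hsub.trans (subset_sUnion_of_mem htS)⟩
    have hopen : (circleTopology X).IsOpen (Ioi (x : WithTop X)) := h ▸ wt_isOpen_Ioi _
    obtain ⟨x₀, x₁, hsub⟩ := key _ hopen (WithTop.coe_lt_top x)
    refine ⟨min x x₀, fun z => ?_⟩
    rcases le_or_gt x₀ z with hz | hz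
    · exact le_trans (min_le_right _ _) hz
    · have : (z : WithTop X) ∈ Ioi (x : WithTop X) := by
        apply hsub
        exact Or.inr ⟨z, by simp [not_and_or, hz], rfl⟩
      exact le_trans (min_le_left _ _) (WithTop.coe_lt_coe.1 this).le
  · -- minimum → equality
    rintro ⟨m, hm⟩
    refine le_antisymm ?_ ?_
    · exact part1
    · refine le_generateFrom ?_
      rintro s ⟨a, rfl | rfl⟩
      · -- Ioi a
        cases a with
        | top =>
          have : {b : WithTop X | ⊤ < b} = (↑) '' (∅ : Set X) := by
            simp [eq_empty_iff_forall_notMem]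
          rw [show Ioi (⊤ : WithTop X) = _ from this]
          exact TopologicalSpace.GenerateOpen.basic _ (Or.inl ⟨∅, gen_empty, rfl⟩)
        | coe y =>
          have : {b : WithTop X | (y : WithTop X) < b} = insert ⊤ ((↑) '' (Icc m y)ᶜ) := by
            have hIcc : (Icc m y)ᶜ = Ioi y := by
              ext z
              simp only [mem_compl_iff, mem_Icc, not_and, not_le, mem_Ioi]
              exact ⟨fun h => h (hm z), fun h _ => h⟩
            rw [hIcc]
            ext z
            cases z with
            | top => simp [WithTop.coe_lt_top]
            | coe w => simp [WithTop.coe_lt_coe, (WithTop.coe_lt_top w).ne]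
          rw [show Ioi (y : WithTop X) = _ from this]
          exact TopologicalSpace.GenerateOpen.basic _ (Or.inr ⟨m, y, rfl⟩)
      · -- Iio a
        cases a with
        | top =>
          have : {b : WithTop X | b < ⊤} = (↑) '' (univ : Set X) := by
            rw [image_univ, WithTop.range_coe]; rfl
          rw [show Iio (⊤ : WithTop X) = _ from this]
          exact TopologicalSpace.GenerateOpen.basic _
            (Or.inl ⟨univ, TopologicalSpace.GenerateOpen.univ, rfl⟩)
        | coe y =>
          have : {b : WithTop X | b < (y : WithTop X)} = (↑) '' (Iio y) := by
            rw [WithTop.image_coe_Iio]; rfl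
          rw [show Iio (y : WithTop X) = _ from this]
          exact TopologicalSpace.GenerateOpen.basic _
            (Or.inl ⟨Iio y, TopologicalSpace.GenerateOpen.basic _ ⟨y, Or.inr rfl⟩, rfl⟩)
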